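/- Let X and Y be compact Hausdorff smooth manifolds without boundary, modeled on finite-dimensional Euclidean spaces. Then every ℝ-algebra isomorphism Ψ : C^∞(X, ℝ) → C^∞(Y, ℝ) preserves the supremum norm: ‖Ψ(f)‖_∞ = ‖f‖_∞ for all f ∈ C^∞(X, ℝ). -/

import Mathlib

open Manifold

section Aux

variable {n : ℕ} {X : Type*} [TopologicalSpace X]
  [ChartedSpace (EuclideanSpace ℝ (Fin n)) X] [IsManifold (𝓡 n) (⊤ : ℕ∞) X]

lemma aux_spectrum_eq_range (f : C^(⊤ : ℕ∞)⟮𝓡 n, X; ℝ⟯) :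
    spectrum ℝ f = Set.range f := by
  ext l
  rw [spectrum.mem_iff]
  constructor
  · intro h
    by_contra hr
    apply h
    have h0 : ∀ x : X, (algebraMap ℝ C^(⊤ : ℕ∞)⟮𝓡 n, X; ℝ⟯ l - f) x ≠ 0 := by
      intro x hx
      have hx' : l - f x = 0 := hx
      exact hr ⟨x, by linarith [sub_eq_zero.mp hx']⟩
    refine IsUnit.of_mul_eq_one
      ⟨fun x => ((algebraMap ℝ C^(⊤ : ℕ∞)⟮𝓡 n, X; ℝ⟯ l - f) x)⁻¹,
        ((algebraMap ℝ C^(⊤ : ℕ∞)⟮𝓡 n, X; ℝ⟯ l - f)).contMDiff.inv₀ h0⟩ ?_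
    ext x
    exact mul_inv_cancel₀ (h0 x)
  · rintro ⟨x, rfl⟩ h
    obtain ⟨u, hu⟩ := h
    have h1 : (↑u * ↑u⁻¹ : C^(⊤ : ℕ∞)⟮𝓡 n, X; ℝ⟯) = 1 := u.mul_inv
    have h2 : (↑u : C^(⊤ : ℕ∞)⟮𝓡 n, X; ℝ⟯) x * (↑u⁻¹ : C^(⊤ : ℕ∞)⟮𝓡 n, X; ℝ⟯) x = 1 :=
      DFunLike.congr_fun h1 x
    rw [hu] at h2
    have h3 : (algebraMap ℝ C^(⊤ : ℕ∞)⟮𝓡 n, X; ℝ⟯ (f x) - f) x = 0 := by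
      show f x - f x = 0; ring
    rw [h3, zero_mul] at h2
    exact zero_ne_one h2

lemma aux_norm_eq_sSup [CompactSpace X] [Nonempty X] (f : C^(⊤ : ℕ∞)⟮𝓡 n, X; ℝ⟯) :
    ‖(⟨⇑f, f.contMDiff.continuous⟩ : C(X, ℝ))‖ = sSup (norm '' spectrum ℝ f) := by
  rw [aux_spectrum_eq_range, ContinuousMap.norm_eq_iSup_norm, ← Set.range_comp]
  rfl

end Aux

/-- For compact Hausdorff smooth manifolds `X` and `Y` without boundary, modeled on
finite-dimensional Euclidean spaces, every `ℝ`-algebra isomorphism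
`Ψ : C^∞(X, ℝ) → C^∞(Y, ℝ)` preserves the supremum norm (the norm of the underlying
continuous map). -/
theorem algEquiv_smooth_functions_norm_preserving
    {n m : ℕ}
    {X : Type*} [TopologicalSpace X] [ChartedSpace (EuclideanSpace ℝ (Fin n)) X]
    [IsManifold (𝓡 n) (⊤ : ℕ∞) X] [T2Space X] [CompactSpace X]
    {Y : Type*} [TopologicalSpace Y] [ChartedSpace (EuclideanSpace ℝ (Fin m)) Y]
    [IsManifold (𝓡 m) (⊤ : ℕ∞) Y] [T2Space Y] [CompactSpace Y]
    (Ψ : C^(⊤ : ℕ∞)⟮𝓡 n, X; ℝ⟯ ≃ₐ[ℝ] C^(⊤ : ℕ∞)⟮𝓡 m, Y; ℝ⟯)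
    (f : C^(⊤ : ℕ∞)⟮𝓡 n, X; ℝ⟯) :
    ‖(⟨⇑(Ψ f), (Ψ f).contMDiff.continuous⟩ : C(Y, ℝ))‖ =
      ‖(⟨⇑f, f.contMDiff.continuous⟩ : C(X, ℝ))‖ := by
  by_cases hX : Nonempty X
  · have hY : Nonempty Y := by
      by_contra hY
      have h10 : (1 : C^(⊤ : ℕ∞)⟮𝓡 m, Y; ℝ⟯) = 0 := by
        ext y; exact absurd ⟨y⟩ hY
      have h10' : (1 : C^(⊤ : ℕ∞)⟮𝓡 n, X; ℝ⟯) = 0 := by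
        have := congrArg Ψ.symm h10
        rwa [map_one, map_zero] at this
      obtain ⟨x⟩ := hX
      have : (1 : ℝ) = 0 := DFunLike.congr_fun h10' x
      norm_num at this
    rw [aux_norm_eq_sSup, aux_norm_eq_sSup, AlgEquiv.spectrum_eq]
  · have hf : f = 0 := by ext x; exact absurd ⟨x⟩ hX
    have hΨf : Ψ f = 0 := by rw [hf, map_zero]
    have e1 : (⟨⇑(Ψ f), (Ψ f).contMDiff.continuous⟩ : C(Y, ℝ)) = 0 := by
      ext y; rw [hΨf]; rfl
    have e2 : (⟨⇑f, f.contMDiff.continuous⟩ : C(X, ℝ)) = 0 := by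
      ext x; exact absurd ⟨x⟩ hX
    rw [e1, e2, norm_zero, norm_zero]
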